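/- Let n ≥ 3, let 1 ≤ i < n/2, let η = e^{2πi/n}, and let g ∈ ℂ[X] be the polynomial with (X−1)(X−η^{i})(X−η^{−i})·g(X) = ((1−η^{i})(1−η^{−i})/n)·X(X+1)(X^{n}−1). Then the number of roots of g in ℂ, counted with multiplicity, whose argument (taken in [0,2π)) lies in the open interval (0, 2πi/n) equals i − 1, and the number of roots of g, counted with multiplicity, whose argument lies in the open interval (0, 2π(n−i)/n) equals n − i − 1. Consequently, since a(g) + A(g) = n and 1 is not a root of g, the perversity function values are π_{κ/d}(φ_{2,i}) = 2i − 1 for κ/d = i/n and π_{κ/d}(φ_{2,i}) = 2(n−i) − 1 for κ/d = (n−i)/n. -/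

import Mathlib

open Polynomial

/-- The argument of a complex number taken in `[0, 2π)`. -/
noncomputable def arg2pi (z : ℂ) : ℝ :=
  if 0 ≤ Complex.arg z then Complex.arg z else Complex.arg z + 2 * Real.pi

lemma arg2pi_exp {θ : ℝ} (h0 : 0 ≤ θ) (h2 : θ < 2 * Real.pi) :
    arg2pi (Complex.exp (θ * Complex.I)) = θ := by
  have hpi := Real.pi_pos
  rcases le_or_gt θ Real.pi with h | h
  · rw [arg2pi, Complex.exp_mul_I, Complex.arg_cos_add_sin_mul_I ⟨by linarith, h⟩, if_pos h0]
  · have hper : Complex.exp (θ * Complex.I)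
        = Complex.exp (((θ - 2 * Real.pi : ℝ) : ℂ) * Complex.I) := by
      rw [show (((θ - 2 * Real.pi : ℝ) : ℂ) * Complex.I)
            = θ * Complex.I - 2 * Real.pi * Complex.I by push_cast; ring,
        Complex.exp_sub, Complex.exp_two_pi_mul_I, div_one]
    rw [arg2pi, hper, Complex.exp_mul_I, Complex.arg_cos_add_sin_mul_I ⟨by linarith, by linarith⟩,
      if_neg (not_le.2 (by linarith))]
    ring

open Classical in
/-- For `n ≥ 3`, `1 ≤ i < n/2`, `η = e^{2πi/n}`, and `g` the generic degree of `φ_{2,i}`: the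
number of roots of `g` (with multiplicity) with argument in `(0, 2πi/n)` is `i − 1`, the number
with argument in `(0, 2π(n−i)/n)` is `n − i − 1`; consequently, since `a(g) + A(g) = n` and `1`
is not a root of `g`, the perversity values are `π_{i/n}(φ_{2,i}) = 2i − 1` and
`π_{(n−i)/n}(φ_{2,i}) = 2(n−i) − 1`. -/
theorem phi2i_perversity (n : ℕ) (hn : 3 ≤ n) (i : ℕ) (hi1 : 1 ≤ i) (hi2 : 2 * i < n)
    (η : ℂ) (hη : η = Complex.exp (2 * Real.pi * Complex.I / (n : ℂ))) (g : ℂ[X])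
    (hg : (X - 1) * (X - C (η ^ i)) * (X - C ((η ^ i)⁻¹)) * g =
      C ((1 - η ^ i) * (1 - (η ^ i)⁻¹) / (n : ℂ)) * (X * (X + 1) * (X ^ n - 1))) :
    (g.roots.filter
        (fun z => 0 < arg2pi z ∧ arg2pi z < 2 * Real.pi * (i : ℝ) / (n : ℝ))).card = i - 1 ∧
    (g.roots.filter
        (fun z => 0 < arg2pi z ∧
          arg2pi z < 2 * Real.pi * ((n - i : ℕ) : ℝ) / (n : ℝ))).card = n - i - 1 ∧
    g.rootMultiplicity 0 + g.natDegree = n ∧ g.eval 1 ≠ 0 ∧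
    ((i : ℝ) / (n : ℝ)) * ((g.rootMultiplicity 0 : ℝ) + (g.natDegree : ℝ)) +
        ((g.roots.filter
          (fun z => 0 < arg2pi z ∧ arg2pi z < 2 * Real.pi * (i : ℝ) / (n : ℝ))).card : ℝ) +
        (g.rootMultiplicity 1 : ℝ) / 2 = 2 * (i : ℝ) - 1 ∧
    (((n - i : ℕ) : ℝ) / (n : ℝ)) * ((g.rootMultiplicity 0 : ℝ) + (g.natDegree : ℝ)) +
        ((g.roots.filter
          (fun z => 0 < arg2pi z ∧
            arg2pi z < 2 * Real.pi * ((n - i : ℕ) : ℝ) / (n : ℝ))).card : ℝ) +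
        (g.rootMultiplicity 1 : ℝ) / 2 = 2 * ((n - i : ℕ) : ℝ) - 1 := by
  have hn0 : n ≠ 0 := by omega
  have hnC : (n : ℂ) ≠ 0 := Nat.cast_ne_zero.2 hn0
  have hnR : (0:ℝ) < n := by exact_mod_cast Nat.pos_of_ne_zero hn0
  have hprim : IsPrimitiveRoot η n := hη ▸ Complex.isPrimitiveRoot_exp n hn0
  have hilt : i < n := by omega
  have h1i : η ^ i ≠ 1 := hprim.pow_ne_one_of_pos_of_lt (by omega) hilt
  have hinv : (η ^ i)⁻¹ = η ^ (n - i) := by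
    symm
    apply eq_inv_of_mul_eq_one_left
    rw [← pow_add, Nat.sub_add_cancel (le_of_lt hilt), hprim.pow_eq_one]
  have h1inv : (η ^ i)⁻¹ ≠ 1 := by
    rw [hinv]; exact hprim.pow_ne_one_of_pos_of_lt (by omega) (by omega)
  have hc : (1 - η ^ i) * (1 - (η ^ i)⁻¹) / (n : ℂ) ≠ 0 :=
    div_ne_zero (mul_ne_zero (sub_ne_zero.2 (Ne.symm h1i)) (sub_ne_zero.2 (Ne.symm h1inv))) hnC
  have hXn : (X ^ n - 1 : ℂ[X]) = X ^ n - C 1 := by rw [map_one]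
  have hP0 : ((X : ℂ[X]) * (X + 1) * (X ^ n - 1)) ≠ 0 := by
    refine Monic.ne_zero ?_
    refine Monic.mul (Monic.mul monic_X ?_) ?_
    · simpa using monic_X_add_C (1 : ℂ)
    · rw [hXn]; exact monic_X_pow_sub_C 1 hn0
  have hLne : (X - 1) * (X - C (η ^ i)) * (X - C ((η ^ i)⁻¹)) * g ≠ 0 := by
    rw [hg]; exact mul_ne_zero (by rwa [Ne, C_eq_zero]) hP0
  have hg0 : g ≠ 0 := right_ne_zero_of_mul hLne
  -- the multiset of the remaining roots of unity
  set M : Multiset ℂ :=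
    ((Multiset.range n).filter (fun k => k ≠ 0 ∧ k ≠ i ∧ k ≠ n - i)).map (fun k => η ^ k) with hM
  have h3 : (Multiset.range n).filter (fun k => ¬(k ≠ 0 ∧ k ≠ i ∧ k ≠ n - i)) =
      ({0, i, n - i} : Multiset ℕ) := by
    rw [Multiset.Nodup.ext ((Multiset.nodup_range n).filter _) (by
      simp only [Multiset.insert_eq_cons, Multiset.nodup_cons, Multiset.mem_cons,
        Multiset.mem_singleton, Multiset.nodup_singleton, and_true]
      omega)]
    intro a
    simp only [Multiset.mem_filter, Multiset.mem_range, Multiset.insert_eq_cons,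
      Multiset.mem_cons, Multiset.mem_singleton]
    omega
  have hsplit3 : (Multiset.range n).map (fun k => η ^ k) =
      ({1, η ^ i, η ^ (n - i)} : Multiset ℂ) + M := by
    conv_lhs => rw [← Multiset.filter_add_not (fun k => k ≠ 0 ∧ k ≠ i ∧ k ≠ n - i)
      (Multiset.range n)]
    rw [Multiset.map_add, add_comm]
    congr 1
    rw [h3]
    simp
  have hXroots : (X ^ n - 1 : ℂ[X]).roots = (Multiset.range n).map (fun k => η ^ k) := by
    have hdef : (X ^ n - C (1:ℂ)).roots = nthRoots n 1 := rfl
    rw [hXn, hdef, hprim.nthRoots_eq (one_pow n)]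
    simp
  have hroots : g.roots = 0 ::ₘ (-1) ::ₘ M := by
    have h1 := congrArg Polynomial.roots hg
    rw [roots_mul hLne, roots_mul (left_ne_zero_of_mul hLne),
      roots_mul (left_ne_zero_of_mul (left_ne_zero_of_mul hLne)),
      show (X - 1 : ℂ[X]) = X - C 1 by rw [map_one], roots_X_sub_C, roots_X_sub_C,
      roots_X_sub_C, roots_C_mul _ hc, roots_mul hP0, roots_mul (left_ne_zero_of_mul hP0),
      roots_X, show (X + 1 : ℂ[X]) = X - C (-1) by rw [map_neg, map_one, sub_neg_eq_add],
      roots_X_sub_C, hXroots, hinv, hsplit3] at h1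
    have e2 : ({1, η ^ i, η ^ (n - i)} : Multiset ℂ) + g.roots
        = {1} + {η ^ i} + {η ^ (n - i)} + g.roots := by
      simp only [Multiset.insert_eq_cons, ← Multiset.singleton_add]; abel
    have e3 : ({1, η ^ i, η ^ (n - i)} : Multiset ℂ) + (0 ::ₘ (-1) ::ₘ M)
        = {0} + {-1} + (({1, η ^ i, η ^ (n - i)} : Multiset ℂ) + M) := by
      simp only [Multiset.insert_eq_cons, ← Multiset.singleton_add]; abel
    exact add_left_cancel (e2.trans (h1.trans e3.symm))
  -- argument of the roots of unity
  have hargk : ∀ k, k < n → arg2pi (η ^ k) = 2 * Real.pi * k / n := by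
    intro k hk
    have hkR : (k : ℝ) < n := Nat.cast_lt.2 hk
    have hexp : η ^ k = Complex.exp ((2 * Real.pi * k / n : ℝ) * Complex.I) := by
      rw [hη, ← Complex.exp_nat_mul]
      congr 1
      push_cast
      ring
    rw [hexp, arg2pi_exp (by positivity)]
    rw [div_lt_iff₀ hnR]
    nlinarith [Real.pi_pos]
  -- generic filter computation on M
  have hMfilt : ∀ b : ℕ, b ≤ n →
      (M.filter (fun z => 0 < arg2pi z ∧ arg2pi z < 2 * Real.pi * b / n)).card
        = ((Finset.range n).filter
            (fun k => (k ≠ 0 ∧ k ≠ i ∧ k ≠ n - i) ∧ 0 < k ∧ k < b)).card := by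
    intro b hb
    rw [hM, Multiset.filter_map, Multiset.card_map, Multiset.filter_filter]
    rw [Multiset.filter_congr (q := fun k => (k ≠ 0 ∧ k ≠ i ∧ k ≠ n - i) ∧ 0 < k ∧ k < b) ?_]
    · rw [← Finset.range_val, ← Finset.filter_val]
      rfl
    · intro k hk
      have hkn : k < n := Multiset.mem_range.1 hk
      rw [Function.comp, hargk k hkn]
      constructor
      · rintro ⟨⟨h1, h2⟩, h3⟩
        refine ⟨h3, ?_, ?_⟩
        · by_contra h0
          push_neg at h0
          interval_cases k
          simp at h1
        · have := h2
          rw [div_lt_div_iff_of_pos_right hnR, mul_lt_mul_iff_right₀ Real.two_pi_pos,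
            Nat.cast_lt] at this
          exact this
      · rintro ⟨h3, h0, hkb⟩
        refine ⟨⟨?_, ?_⟩, h3⟩
        · have : (0:ℝ) < k := Nat.cast_pos.2 h0
          positivity
        · rw [div_lt_div_iff_of_pos_right hnR, mul_lt_mul_iff_right₀ Real.two_pi_pos, Nat.cast_lt]
          exact hkb
  -- values of arg2pi at 0 and -1
  have harg0 : arg2pi 0 = 0 := by rw [arg2pi, Complex.arg_zero, if_pos le_rfl]
  have hargm1 : arg2pi (-1) = Real.pi := by
    rw [arg2pi, Complex.arg_neg_one, if_pos Real.pi_pos.le]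
  have hpi := Real.pi_pos
  -- counting
  have hm1lt : Real.pi < 2 * Real.pi * ((n - i : ℕ) : ℝ) / n := by
    rw [lt_div_iff₀ hnR]
    have h2i : (2 * i : ℝ) < n := by exact_mod_cast hi2
    have hni : ((n - i : ℕ) : ℝ) = (n : ℝ) - i := by
      rw [Nat.cast_sub hilt.le]
    nlinarith
  have hm1ge : ¬ (Real.pi < 2 * Real.pi * (i : ℝ) / n) := by
    push_neg
    rw [div_le_iff₀ hnR]
    have h2i : (2 * i : ℝ) ≤ n := by exact_mod_cast hi2.le
    nlinarith
  have hfilt1 : (g.roots.filter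
      (fun z => 0 < arg2pi z ∧ arg2pi z < 2 * Real.pi * (i : ℝ) / (n : ℝ))).card = i - 1 := by
    rw [hroots, Multiset.filter_cons_of_neg _ (by rw [harg0]; simp),
      Multiset.filter_cons_of_neg _ (by rw [hargm1]; exact fun h => hm1ge h.2),
      hMfilt i hilt.le]
    have he : (Finset.range n).filter
        (fun k => (k ≠ 0 ∧ k ≠ i ∧ k ≠ n - i) ∧ 0 < k ∧ k < i) = Finset.Ioo 0 i := by
      ext k
      simp only [Finset.mem_filter, Finset.mem_range, Finset.mem_Ioo]
      omega
    rw [he, Nat.card_Ioo]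
    omega
  have hfilt2 : (g.roots.filter
      (fun z => 0 < arg2pi z ∧
        arg2pi z < 2 * Real.pi * ((n - i : ℕ) : ℝ) / (n : ℝ))).card = n - i - 1 := by
    rw [hroots, Multiset.filter_cons_of_neg _ (by rw [harg0]; simp),
      Multiset.filter_cons_of_pos _ (by rw [hargm1]; exact ⟨hpi, hm1lt⟩),
      Multiset.card_cons, hMfilt (n - i) (by omega)]
    have he : (Finset.range n).filter
        (fun k => (k ≠ 0 ∧ k ≠ i ∧ k ≠ n - i) ∧ 0 < k ∧ k < n - i)
          = (Finset.Ioo 0 (n - i)).erase i := by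
      ext k
      simp only [Finset.mem_filter, Finset.mem_range, Finset.mem_Ioo, Finset.mem_erase]
      omega
    rw [he, Finset.card_erase_of_mem (by simp only [Finset.mem_Ioo]; omega), Nat.card_Ioo]
    omega
  have hMcard : Multiset.card M = n - 3 := by
    rw [hM, Multiset.card_map]
    have hcc := congrArg Multiset.card
      (Multiset.filter_add_not (fun k => k ≠ 0 ∧ k ≠ i ∧ k ≠ n - i) (Multiset.range n))
    rw [Multiset.card_add, h3, Multiset.card_range] at hcc
    simp only [Multiset.insert_eq_cons, Multiset.card_cons, Multiset.card_singleton] at hcc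
    omega
  have hdeg : g.natDegree = n - 1 := by
    rw [← IsAlgClosed.card_roots_eq_natDegree,
      hroots]
    simp only [Multiset.card_cons, hMcard]
    omega
  have h0M : (0 : ℂ) ∉ M := by
    rw [hM]
    simp only [Multiset.mem_map, not_exists]
    rintro k ⟨-, hk0⟩
    exact pow_ne_zero k (hprim.ne_zero hn0) hk0
  have h1M : (1 : ℂ) ∉ M := by
    rw [hM]
    simp only [Multiset.mem_map, Multiset.mem_filter, Multiset.mem_range, not_exists]
    rintro k ⟨⟨hkn, hk0, -, -⟩, hk1⟩
    exact hprim.pow_ne_one_of_pos_of_lt hk0 hkn hk1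
  have hmult0 : g.rootMultiplicity 0 = 1 := by
    rw [← Polynomial.count_roots, hroots, Multiset.count_cons_self,
      Multiset.count_cons_of_ne (by norm_num), Multiset.count_eq_zero.2 h0M]
  have hmult1 : g.rootMultiplicity 1 = 0 := by
    rw [← Polynomial.count_roots, hroots, Multiset.count_cons_of_ne (by norm_num),
      Multiset.count_cons_of_ne (by norm_num), Multiset.count_eq_zero.2 h1M]
  have heval1 : g.eval 1 ≠ 0 := by
    intro h
    have hmem : (1 : ℂ) ∈ g.roots := (Polynomial.mem_roots hg0).2 h
    rw [hroots, Multiset.mem_cons, Multiset.mem_cons] at hmem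
    rcases hmem with h' | h' | h' <;> first | exact h1M h' | norm_num at h'
  have hcast1 : ((i - 1 : ℕ) : ℝ) = (i : ℝ) - 1 := by
    rw [Nat.cast_sub hi1, Nat.cast_one]
  have hcast2 : ((n - i : ℕ) : ℝ) = (n : ℝ) - i := Nat.cast_sub hilt.le
  have hcast3 : ((n - i - 1 : ℕ) : ℝ) = (n : ℝ) - i - 1 := by
    rw [Nat.cast_sub (by omega : 1 ≤ n - i), Nat.cast_sub hilt.le, Nat.cast_one]
  have hcast4 : ((n - 1 : ℕ) : ℝ) = (n : ℝ) - 1 := by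
    rw [Nat.cast_sub (by omega : 1 ≤ n), Nat.cast_one]
  refine ⟨hfilt1, hfilt2, by omega, heval1, ?_, ?_⟩
  · rw [hfilt1, hmult0, hmult1, hdeg, hcast1, hcast4]
    push_cast
    field_simp
    ring
  · rw [hfilt2, hmult0, hmult1, hdeg, hcast2, hcast3, hcast4]
    push_cast
    field_simp
    ring
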